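/- With c and Γ as above and any y ∈ [c, 1], ∫_c^y x·Γ/(2x−1) dx + ∫_y^1 (1−x)·Γ/(2x−1) dx = Γ·y. -/

import Mathlib

open Real intervalIntegral

lemma log_deriv_aux (x : ℝ) (hx : 0 < 2 * x - 1) :
    HasDerivAt (fun t : ℝ => Real.log (2 * t - 1)) (2 / (2 * x - 1)) x := by
  have h1 : HasDerivAt (fun t : ℝ => 2 * t - 1) 2 x := by
    simpa using ((hasDerivAt_id x).const_mul 2).sub_const 1
  have := (Real.hasDerivAt_log (ne_of_gt hx)).comp x h1
  refine this.congr_deriv ?_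
  field_simp

lemma deriv1 (Γ x : ℝ) (hx : 0 < 2 * x - 1) :
    HasDerivAt (fun t : ℝ => Γ * (t / 2 + Real.log (2 * t - 1) / 4))
      (x * (Γ / (2 * x - 1))) x := by
  have h2 : HasDerivAt (fun t : ℝ => t / 2 + Real.log (2 * t - 1) / 4)
      (1 / 2 + (2 / (2 * x - 1)) / 4) x :=
    ((hasDerivAt_id x).div_const 2).add ((log_deriv_aux x hx).div_const 4)
  have := h2.const_mul Γ
  refine this.congr_deriv ?_
  field_simp
  ring

lemma deriv2 (Γ x : ℝ) (hx : 0 < 2 * x - 1) :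
    HasDerivAt (fun t : ℝ => Γ * (Real.log (2 * t - 1) / 4 - t / 2))
      ((1 - x) * (Γ / (2 * x - 1))) x := by
  have h2 : HasDerivAt (fun t : ℝ => Real.log (2 * t - 1) / 4 - t / 2)
      ((2 / (2 * x - 1)) / 4 - 1 / 2) x :=
    ((log_deriv_aux x hx).div_const 4).sub ((hasDerivAt_id x).div_const 2)
  have := h2.const_mul Γ
  refine this.congr_deriv ?_
  field_simp
  ring

/-- with `c`, `Γ` as before and any `y ∈ [c,1]`,
`∫_c^y x·Γ/(2x−1) dx + ∫_y^1 (1−x)·Γ/(2x−1) dx = Γ·y`. -/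
theorem mixed_integral_identity
    (c : ℝ) (hc1 : 1 / 2 < c) (hc2 : c < 1)
    (hc : Real.log (1 / (2 * c - 1)) - 2 * c = 2)
    (y : ℝ) (hy1 : c ≤ y) (hy2 : y ≤ 1) :
    (∫ x in c..y, x * ((2 / Real.log (1 / (2 * c - 1))) / (2 * x - 1)))
      + (∫ x in y..1, (1 - x) * ((2 / Real.log (1 / (2 * c - 1))) / (2 * x - 1)))
      = (2 / Real.log (1 / (2 * c - 1))) * y := by
  set Γ : ℝ := 2 / Real.log (1 / (2 * c - 1)) with hΓ
  have hcpos : 0 < 2 * c - 1 := by linarith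
  -- positivity of 2x-1 on the intervals
  have hpos1 : ∀ x ∈ Set.uIcc c y, 0 < 2 * x - 1 := by
    intro x hx
    rw [Set.uIcc_of_le hy1] at hx
    linarith [hx.1]
  have hpos2 : ∀ x ∈ Set.uIcc y (1 : ℝ), 0 < 2 * x - 1 := by
    intro x hx
    rw [Set.uIcc_of_le hy2] at hx
    have : c ≤ x := le_trans hy1 hx.1
    linarith
  have hcont1 : ContinuousOn (fun x : ℝ => x * (Γ / (2 * x - 1))) (Set.uIcc c y) := by
    apply ContinuousOn.mul continuousOn_id
    apply ContinuousOn.div continuousOn_const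
    · fun_prop
    · intro x hx; exact ne_of_gt (hpos1 x hx)
  have hcont2 : ContinuousOn (fun x : ℝ => (1 - x) * (Γ / (2 * x - 1))) (Set.uIcc y 1) := by
    apply ContinuousOn.mul (by fun_prop)
    apply ContinuousOn.div continuousOn_const
    · fun_prop
    · intro x hx; exact ne_of_gt (hpos2 x hx)
  have hI1 : (∫ x in c..y, x * (Γ / (2 * x - 1)))
      = Γ * (y / 2 + Real.log (2 * y - 1) / 4) - Γ * (c / 2 + Real.log (2 * c - 1) / 4) := by
    apply intervalIntegral.integral_eq_sub_of_hasDerivAt (f := fun t => Γ * (t / 2 + Real.log (2 * t - 1) / 4))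
    · intro x hx; exact deriv1 Γ x (hpos1 x hx)
    · exact hcont1.intervalIntegrable
  have hI2 : (∫ x in y..1, (1 - x) * (Γ / (2 * x - 1)))
      = Γ * (Real.log (2 * 1 - 1) / 4 - 1 / 2) - Γ * (Real.log (2 * y - 1) / 4 - y / 2) := by
    apply intervalIntegral.integral_eq_sub_of_hasDerivAt (f := fun t => Γ * (Real.log (2 * t - 1) / 4 - t / 2))
    · intro x hx; exact deriv2 Γ x (hpos2 x hx)
    · exact hcont2.intervalIntegrable
  have hlog : Real.log (2 * c - 1) = -2 - 2 * c := by
    have : Real.log (1 / (2 * c - 1)) = -Real.log (2 * c - 1) := by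
      rw [one_div, Real.log_inv]
    rw [this] at hc
    linarith
  rw [hI1, hI2, hlog]
  norm_num
  ring
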